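/- Suppose h satisfies the Riccati equation z² = h^{(2)} − u·h^{(0)} where h^{(j)} are the Faà di Bruno iterates of h. Then multiplication by z² preserves the span H₊ of the Faà di Bruno iterates: z²·H₊ ⊆ H₊. In particular z^{2j}·1 ∈ H₊ and z^{2j}·h ∈ H₊ for all j ≥ 0. -/

import Mathlib

/- Formal Laurent series in `z⁻¹` are modelled as Hahn series in `ζ = z⁻¹`:
the coefficient of `z^m` is the coefficient at index `-m`.  The coefficient
ring `R` (smooth functions of `x`) carries a derivation `d = ∂_x` acting
coefficientwise on Laurent series. -/

variable {R : Type*} [CommRing R]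

/-- Coefficientwise action of `∂_x` on Laurent series. -/
noncomputable def liftD (d : R →+ R) (f : HahnSeries ℤ R) : HahnSeries ℤ R where
  coeff n := d (f.coeff n)
  isPWO_support' := f.isPWO_support'.mono (by
    intro n hn
    simp only [Function.mem_support] at hn ⊢
    intro h0
    exact hn (by rw [h0, map_zero]))

/-- The Laurent series `z` (i.e. `ζ⁻¹`). -/
noncomputable def Zs (R : Type*) [CommRing R] : HahnSeries ℤ R :=
  HahnSeries.single (-1) 1

/-- Faà di Bruno iterates: `h⁽⁰⁾ = 1`, `h⁽ʲ⁺¹⁾ = (∂_x + h)·h⁽ʲ⁾`. -/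
noncomputable def fdb (d : R →+ R) (h : HahnSeries ℤ R) : ℕ → HahnSeries ℤ R
  | 0 => 1
  | j + 1 => liftD d (fdb d h j) + h * fdb d h j

lemma liftD_coeff (d : R →+ R) (f : HahnSeries ℤ R) (n : ℤ) :
    (liftD d f).coeff n = d (f.coeff n) := rfl

lemma liftD_add' (d : R →+ R) (f g : HahnSeries ℤ R) :
    liftD d (f + g) = liftD d f + liftD d g := by
  ext n; simp [liftD_coeff, HahnSeries.coeff_add]

lemma liftD_zero' (d : R →+ R) : liftD d (0 : HahnSeries ℤ R) = 0 := by
  ext n; simp [liftD_coeff]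

lemma d_one (d : R →+ R) (hd : ∀ a b : R, d (a * b) = d a * b + a * d b) :
    d 1 = 0 := by
  have h2 : d 1 = d 1 + d 1 := by
    have := hd 1 1; simpa using this
  exact (left_eq_add.mp h2)

lemma liftD_one (d : R →+ R) (hd : ∀ a b : R, d (a * b) = d a * b + a * d b) :
    liftD d (1 : HahnSeries ℤ R) = 0 := by
  ext n
  simp only [liftD_coeff, HahnSeries.coeff_one, HahnSeries.coeff_zero]
  split <;> simp [d_one d hd]

lemma liftD_smul' (d : R →+ R) (hd : ∀ a b : R, d (a * b) = d a * b + a * d b)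
    (c : R) (f : HahnSeries ℤ R) :
    liftD d (c • f) = d c • f + c • liftD d f := by
  ext n
  simp [liftD_coeff, HahnSeries.coeff_add, hd, smul_eq_mul]

lemma zsq_coeff (f : HahnSeries ℤ R) (n : ℤ) :
    ((Zs R) ^ 2 * f).coeff n = f.coeff (n + 2) := by
  have hz : (Zs R) ^ 2 = HahnSeries.single (-2 : ℤ) (1 : R) := by
    rw [sq, Zs, HahnSeries.single_mul_single]
    norm_num
  rw [hz]
  have := HahnSeries.coeff_single_mul_add (r := (1 : R)) (x := f)
    (a := n + 2) (b := (-2 : ℤ))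
  simpa using this

lemma liftD_zsq (d : R →+ R) (f : HahnSeries ℤ R) :
    liftD d ((Zs R) ^ 2 * f) = (Zs R) ^ 2 * liftD d f := by
  ext n
  rw [liftD_coeff, zsq_coeff, zsq_coeff, liftD_coeff]

lemma L_mem (d : R →+ R) (hd : ∀ a b : R, d (a * b) = d a * b + a * d b)
    (h : HahnSeries ℤ R) (p : HahnSeries ℤ R)
    (hp : p ∈ Submodule.span R (Set.range (fdb d h))) :
    liftD d p + h * p ∈ Submodule.span R (Set.range (fdb d h)) := by
  induction hp using Submodule.span_induction with
  | mem x hx =>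
    obtain ⟨j, rfl⟩ := hx
    exact Submodule.subset_span ⟨j + 1, rfl⟩
  | zero => simp [liftD_zero']
  | add x y hx hy ihx ihy =>
    have e : liftD d (x + y) + h * (x + y)
        = (liftD d x + h * x) + (liftD d y + h * y) := by
      rw [liftD_add']; ring
    rw [e]; exact add_mem ihx ihy
  | smul c x hx ih =>
    have e : liftD d (c • x) + h * (c • x)
        = d c • x + c • (liftD d x + h * x) := by
      rw [liftD_smul' d hd]
      simp only [← HahnSeries.C_mul_eq_smul]
      ring
    rw [e]
    exact add_mem (Submodule.smul_mem _ _ hx) (Submodule.smul_mem _ _ ih)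

/-- if `h` satisfies the Riccati equation `z² = h⁽²⁾ − u·h⁽⁰⁾`,
then multiplication by `z²` preserves the span `H₊` of the Faà di Bruno
iterates; in particular `z^{2j}·1 ∈ H₊` and `z^{2j}·h ∈ H₊` for all `j ≥ 0`. -/
theorem zsq_preserves_Hplus (d : R →+ R)
    (hd : ∀ a b : R, d (a * b) = d a * b + a * d b)
    (h : HahnSeries ℤ R) (u : R)
    (h_monic : h.coeff (-1) = 1 ∧ h.coeff 0 = 0 ∧ ∀ n : ℤ, n < -1 → h.coeff n = 0)
    (hric : (Zs R) ^ 2 = fdb d h 2 - u • fdb d h 0) :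
    (∀ f ∈ Submodule.span R (Set.range (fdb d h)),
        (Zs R) ^ 2 * f ∈ Submodule.span R (Set.range (fdb d h))) ∧
      (∀ j : ℕ, (Zs R) ^ (2 * j) * 1 ∈ Submodule.span R (Set.range (fdb d h)) ∧
        (Zs R) ^ (2 * j) * h ∈ Submodule.span R (Set.range (fdb d h))) := by
  have key : ∀ j : ℕ,
      (Zs R) ^ 2 * fdb d h j ∈ Submodule.span R (Set.range (fdb d h)) := by
    intro j
    induction j with
    | zero =>
      have e : (Zs R) ^ 2 * fdb d h 0 = (Zs R) ^ 2 := by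
        rw [show fdb d h 0 = 1 from rfl, mul_one]
      rw [e, hric]
      exact sub_mem (Submodule.subset_span ⟨2, rfl⟩)
        (Submodule.smul_mem _ _ (Submodule.subset_span ⟨0, rfl⟩))
    | succ j ih =>
      have e : (Zs R) ^ 2 * fdb d h (j + 1)
          = liftD d ((Zs R) ^ 2 * fdb d h j) + h * ((Zs R) ^ 2 * fdb d h j) := by
        rw [liftD_zsq, show fdb d h (j + 1) = liftD d (fdb d h j) + h * fdb d h j from rfl]
        ring
      rw [e]
      exact L_mem d hd h _ ih
  have part1 : ∀ f ∈ Submodule.span R (Set.range (fdb d h)),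
      (Zs R) ^ 2 * f ∈ Submodule.span R (Set.range (fdb d h)) := by
    intro f hf
    induction hf using Submodule.span_induction with
    | mem x hx => obtain ⟨j, rfl⟩ := hx; exact key j
    | zero => simpa using zero_mem _
    | add x y hx hy ihx ihy => rw [mul_add]; exact add_mem ihx ihy
    | smul c x hx ih =>
      have e : (Zs R) ^ 2 * (c • x) = c • ((Zs R) ^ 2 * x) := by
        simp only [← HahnSeries.C_mul_eq_smul]; ring
      rw [e]; exact Submodule.smul_mem _ _ ih
  refine ⟨part1, ?_⟩
  have h1 : (1 : HahnSeries ℤ R) ∈ Submodule.span R (Set.range (fdb d h)) :=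
    Submodule.subset_span ⟨0, rfl⟩
  have hh : h ∈ Submodule.span R (Set.range (fdb d h)) := by
    have e : fdb d h 1 = h := by
      rw [show fdb d h 1 = liftD d (fdb d h 0) + h * fdb d h 0 from rfl,
        show fdb d h 0 = 1 from rfl, liftD_one d hd, mul_one, zero_add]
    exact Submodule.subset_span ⟨1, e⟩
  intro j
  induction j with
  | zero => simpa using ⟨h1, hh⟩
  | succ j ih =>
    have e : ∀ x : HahnSeries ℤ R,
        (Zs R) ^ (2 * (j + 1)) * x = (Zs R) ^ 2 * ((Zs R) ^ (2 * j) * x) := by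
      intro x
      rw [show 2 * (j + 1) = 2 + 2 * j by ring, pow_add, mul_assoc]
    exact ⟨by rw [e]; exact part1 _ ih.1, by rw [e]; exact part1 _ ih.2⟩
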